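/- In the two-agent entropy equilibrium with prices: let traveler flows minimize Σ_k q_k(ln q_k − 1 − U_k + β_T·η_k·[k is priced]) and driver flows minimize Σ_k p_k(ln p_k − 1 − W_k − β_D·ρ_k), with demand constraints Σ_k q_k = d and Σ_k p_k = Q. If at prices η_k = ρ_k the market clears (q_k = p_k for priced modes), then the combined flows solve the single convex program minimizing (1/β_T)Σ_k q_k(ln q_k − 1 − U_k) + (1/β_D)Σ_k p_k(ln p_k − 1 − W_k) subject to both demand constraints and the clearing constraints q_k = p_k, with ρ_k recovered as the Lagrange multiplier of the clearing constraint (scaled appropriately). -/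

import Mathlib

open Real Finset

lemma hasDerivAt_xlog (a x : ℝ) (hx : x ≠ 0) :
    HasDerivAt (fun x => x * (Real.log x - 1 - a)) (Real.log x - a) x := by
  have h := (hasDerivAt_id x).mul (((Real.hasDerivAt_log hx).sub_const 1).sub_const a)
  have e : (1 * (Real.log x - 1 - a) + id x * x⁻¹) = Real.log x - a := by
    simp only [id, mul_inv_cancel₀ hx]; ring
  rw [e] at h
  exact h

lemma entropy_stationary {K : Type*} [Fintype K] [DecidableEq K]
    (a : K → ℝ) (d : ℝ) (q : K → ℝ) (hq : ∀ k, 0 < q k) (hsum : ∑ k, q k = d)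
    (hmin : ∀ q' : K → ℝ, (∀ k, 0 < q' k) → (∑ k, q' k = d) →
      (∑ k, q k * (Real.log (q k) - 1 - a k)) ≤
        ∑ k, q' k * (Real.log (q' k) - 1 - a k))
    (k j : K) : Real.log (q k) - a k = Real.log (q j) - a j := by
  rcases eq_or_ne k j with rfl | hkj
  · rfl
  have hj' : j ∈ (Finset.univ.erase k) := by simp [Ne.symm hkj]
  have hsplit : ∀ (f : K → ℝ),
      ∑ i, f i = f k + (f j + ∑ i ∈ (Finset.univ.erase k).erase j, f i) := by
    intro f
    rw [← Finset.add_sum_erase _ f (Finset.mem_univ k), ← Finset.add_sum_erase _ f hj']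
  set Q' : ℝ → K → ℝ := fun t i => if i = k then q k + t else if i = j then q j - t else q i
    with hQ'
  set C : ℝ := ∑ i ∈ (Finset.univ.erase k).erase j, q i * (Real.log (q i) - 1 - a i) with hC
  set g : ℝ → ℝ := fun t => (q k + t) * (Real.log (q k + t) - 1 - a k) +
      ((q j - t) * (Real.log (q j - t) - 1 - a j) + C) with hg
  have hQ0 : Q' 0 = q := by
    funext i
    simp only [hQ']
    split_ifs with h1 h2
    · simp [h1]
    · simp [h2]
    · rfl
  have hgt : ∀ t, g t = ∑ i, Q' t i * (Real.log (Q' t i) - 1 - a i) := by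
    intro t
    rw [hsplit (fun i => Q' t i * (Real.log (Q' t i) - 1 - a i))]
    simp only [hQ', if_pos rfl, if_neg hkj, if_neg (Ne.symm hkj), hg, hC]
    congr 2
    apply Finset.sum_congr rfl
    intro i hi
    have h1 : i ≠ k := Finset.ne_of_mem_erase (Finset.mem_of_mem_erase hi)
    have h2 : i ≠ j := Finset.ne_of_mem_erase hi
    simp [h1, h2]
  have εpos : (0:ℝ) < min (q k) (q j) := lt_min (hq k) (hq j)
  have hloc : IsLocalMin g 0 := by
    filter_upwards [Metric.ball_mem_nhds (0:ℝ) εpos] with t ht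
    rw [Metric.mem_ball, Real.dist_eq, sub_zero] at ht
    have ht1 : -q k < t := by
      have := abs_lt.mp ht
      have := min_le_left (q k) (q j)
      linarith [this, (abs_lt.mp ht).1]
    have ht2 : t < q j := lt_of_lt_of_le (abs_lt.mp ht).2 (min_le_right _ _)
    have hpos : ∀ i, 0 < Q' t i := by
      intro i
      simp only [hQ']
      split_ifs
      · linarith
      · linarith
      · exact hq i
    have hsum' : ∑ i, Q' t i = d := by
      rw [hsplit (Q' t), ← hsum, hsplit q]
      simp only [hQ', if_pos rfl, if_neg hkj, if_neg (Ne.symm hkj)]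
      have : ∑ i ∈ (Finset.univ.erase k).erase j, Q' t i
          = ∑ i ∈ (Finset.univ.erase k).erase j, q i := by
        apply Finset.sum_congr rfl
        intro i hi
        have h1 : i ≠ k := Finset.ne_of_mem_erase (Finset.mem_of_mem_erase hi)
        have h2 : i ≠ j := Finset.ne_of_mem_erase hi
        simp [hQ', h1, h2]
      rw [this]
      split_ifs with h
      · ring
      · exact absurd trivial h
    have := hmin (Q' t) hpos hsum'
    rw [← hgt t] at this
    have h0 : g 0 = ∑ i, q i * (Real.log (q i) - 1 - a i) := by
      rw [hgt 0, hQ0]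
    rw [← h0] at this
    exact this
  have hd1 : HasDerivAt (fun t : ℝ => q k + t) 1 0 := (hasDerivAt_id 0).const_add _
  have hd2 : HasDerivAt (fun t : ℝ => q j - t) (-1) 0 := by
    simpa using (hasDerivAt_id (0:ℝ)).const_sub (q j)
  have h1 : HasDerivAt (fun t => (q k + t) * (Real.log (q k + t) - 1 - a k))
      (Real.log (q k) - a k) 0 := by
    have := (hasDerivAt_xlog (a k) (q k + 0) (by simpa using (hq k).ne')).comp 0 hd1
    simpa [Function.comp_def] using this
  have h2 : HasDerivAt (fun t => (q j - t) * (Real.log (q j - t) - 1 - a j))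
      (-(Real.log (q j) - a j)) 0 := by
    have := (hasDerivAt_xlog (a j) (q j - 0) (by simpa using (hq j).ne')).comp 0 hd2
    have h' : Real.log (q j - 0) - a j = Real.log (q j) - a j := by norm_num
    simpa [h', Function.comp_def] using this
  have hderiv : HasDerivAt g ((Real.log (q k) - a k) + -(Real.log (q j) - a j)) 0 :=
    h1.add (h2.add_const C)
  have hz := hloc.deriv_eq_zero
  rw [hderiv.deriv] at hz
  linarith

/-- single-OD version of Theorem 1: if traveler flows `q` solve the
traveler's entropy program with prices `η`, driver flows `p` solve the driver's
entropy program with prices `ρ`, prices agree (`η = ρ` on the priced set `S`) and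
the market clears (`q = p` on `S`), then `(q, p)` solves the combined convex program,
and `ρ` is recovered (with multipliers `μT, μD` for the demand constraints) as the
Lagrange multiplier of the clearing constraints. -/
theorem combined_convex_reformulation
    {K : Type*} [Fintype K] [DecidableEq K] [Nonempty K] (S : Finset K)
    (βT βD : ℝ) (hβT : 0 < βT) (hβD : 0 < βD)
    (U W η ρ : K → ℝ) (d Q : ℝ) (hd : 0 < d) (hQ : 0 < Q)
    (Ft : (K → ℝ) → ℝ)
    (hFt : Ft = fun q => ∑ k, q k *
      (Real.log (q k) - 1 - U k + βT * (if k ∈ S then η k else 0)))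
    (Fd : (K → ℝ) → ℝ)
    (hFd : Fd = fun p => ∑ k, p k *
      (Real.log (p k) - 1 - W k - βD * (if k ∈ S then ρ k else 0)))
    (G : (K → ℝ) → (K → ℝ) → ℝ)
    (hG : G = fun q p =>
      (1 / βT) * ∑ k, q k * (Real.log (q k) - 1 - U k) +
      (1 / βD) * ∑ k, p k * (Real.log (p k) - 1 - W k))
    (q p : K → ℝ) (hqpos : ∀ k, 0 < q k) (hppos : ∀ k, 0 < p k)
    (hqsum : ∑ k, q k = d) (hpsum : ∑ k, p k = Q)
    (hqmin : ∀ q' : K → ℝ, (∀ k, 0 < q' k) → (∑ k, q' k = d) → Ft q ≤ Ft q')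
    (hpmin : ∀ p' : K → ℝ, (∀ k, 0 < p' k) → (∑ k, p' k = Q) → Fd p ≤ Fd p')
    (hprice : ∀ k ∈ S, η k = ρ k)
    (hclear : ∀ k ∈ S, q k = p k) :
    (∀ q' p' : K → ℝ, (∀ k, 0 < q' k) → (∀ k, 0 < p' k) →
        (∑ k, q' k = d) → (∑ k, p' k = Q) → (∀ k ∈ S, q' k = p' k) →
        G q p ≤ G q' p') ∧
    ∃ μT μD : ℝ, ∀ k ∈ S,
      (1 / βT) * (Real.log (q k) - U k) + μT = -ρ k ∧
      (1 / βD) * (Real.log (p k) - W k) + μD = ρ k := by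
  set aT : K → ℝ := fun k => U k - βT * (if k ∈ S then η k else 0) with haT
  set aD : K → ℝ := fun k => W k + βD * (if k ∈ S then ρ k else 0) with haD
  have hFt' : ∀ x : K → ℝ, Ft x = ∑ k, x k * (Real.log (x k) - 1 - aT k) := by
    intro x; rw [hFt]
    exact Finset.sum_congr rfl fun i _ => by simp only [haT]; ring
  have hFd' : ∀ x : K → ℝ, Fd x = ∑ k, x k * (Real.log (x k) - 1 - aD k) := by
    intro x; rw [hFd]
    exact Finset.sum_congr rfl fun i _ => by simp only [haD]; ring
  have hTstat := entropy_stationary aT d q hqpos hqsum (fun q' h1 h2 => by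
    have := hqmin q' h1 h2; rwa [hFt' q, hFt' q'] at this)
  have hDstat := entropy_stationary aD Q p hppos hpsum (fun p' h1 h2 => by
    have := hpmin p' h1 h2; rwa [hFd' p, hFd' p'] at this)
  have hite : ∀ (f : K → ℝ), ∑ k, (if k ∈ S then f k else 0) = ∑ k ∈ S, f k := by
    intro f; rw [Finset.sum_ite_mem, Finset.univ_inter]
  have hGid : ∀ (x y : K → ℝ), (1/βT) * Ft x + (1/βD) * Fd y
      = G x y + ∑ k ∈ S, η k * x k - ∑ k ∈ S, ρ k * y k := by
    intro x y
    have e1 : Ft x = (∑ k, x k * (Real.log (x k) - 1 - U k)) + βT * ∑ k ∈ S, η k * x k := by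
      rw [hFt, Finset.mul_sum, ← hite (fun k => βT * (η k * x k)), ← Finset.sum_add_distrib]
      exact Finset.sum_congr rfl fun i _ => by split_ifs <;> ring
    have e2 : Fd y = (∑ k, y k * (Real.log (y k) - 1 - W k)) - βD * ∑ k ∈ S, ρ k * y k := by
      rw [hFd, Finset.mul_sum, ← hite (fun k => βD * (ρ k * y k)), ← Finset.sum_sub_distrib]
      exact Finset.sum_congr rfl fun i _ => by split_ifs <;> ring
    rw [e1, e2, hG]
    field_simp
    ring
  have hz : ∀ (x y : K → ℝ), (∀ k ∈ S, x k = y k) →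
      ∑ k ∈ S, η k * x k - ∑ k ∈ S, ρ k * y k = 0 := by
    intro x y h
    rw [sub_eq_zero]
    exact Finset.sum_congr rfl fun i hi => by rw [hprice i hi, h i hi]
  constructor
  · intro q' p' h1 h2 h3 h4 h5
    have hGq : G q p = (1/βT) * Ft q + (1/βD) * Fd p := by
      have := hGid q p; have h0 := hz q p hclear; linarith
    have hGq' : G q' p' = (1/βT) * Ft q' + (1/βD) * Fd p' := by
      have := hGid q' p'; have h0 := hz q' p' h5; linarith
    rw [hGq, hGq']
    have hq' := hqmin q' h1 h3
    have hp' := hpmin p' h2 h4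
    have c1 : (0:ℝ) ≤ 1/βT := by positivity
    have c2 : (0:ℝ) ≤ 1/βD := by positivity
    exact add_le_add (mul_le_mul_of_nonneg_left hq' c1) (mul_le_mul_of_nonneg_left hp' c2)
  · set k0 := Classical.arbitrary K
    set cT : ℝ := Real.log (q k0) - aT k0 with hcT
    set cD : ℝ := Real.log (p k0) - aD k0 with hcD
    refine ⟨-(cT/βT), -(cD/βD), fun k hk => ?_⟩
    have hη : η k = ρ k := hprice k hk
    have e1 : Real.log (q k) - U k = cT - βT * ρ k := by
      have h := hTstat k k0
      simp only [haT, if_pos hk] at h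
      rw [hη] at h
      simp only [hcT, haT]
      linarith
    have e2 : Real.log (p k) - W k = cD + βD * ρ k := by
      have h := hDstat k k0
      simp only [haD, if_pos hk] at h
      simp only [hcD, haD]
      linarith
    constructor
    · rw [e1]; field_simp; ring
    · rw [e2]; field_simp; ring
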